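/- Let X be an ℝ^d-valued random vector, β ∈ (0,1), and let ℓ : ℝ^d × ℝ^p → ℝ be such that θ ↦ ℓ(x, θ) is convex for every x ∈ ℝ^d and E[|ℓ(X, θ)|] < ∞ for every θ. Then the function θ ↦ inf_{u ∈ ℝ} { u + (1/β) E[(ℓ(X, θ) − u)^+] } is convex on ℝ^p. -/

import Mathlib

open MeasureTheory

/-- **Convexity of CVaR as a function of the decision.**
If `θ ↦ ℓ(x, θ)` is convex for every `x` and `ℓ(X, θ)` is integrable for every
`θ`, then `θ ↦ inf_{u ∈ ℝ} { u + β⁻¹ E[(ℓ(X, θ) - u)⁺] }` is convex. -/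
theorem cvar_convex_in_decision {d p : ℕ}
    {Ω : Type*} [MeasurableSpace Ω] (μ : Measure Ω) [IsProbabilityMeasure μ]
    (X : Ω → (Fin d → ℝ)) (hX : Measurable X)
    (β : ℝ) (hβ : β ∈ Set.Ioo (0 : ℝ) 1)
    (ℓ : (Fin d → ℝ) → (Fin p → ℝ) → ℝ)
    (hconv : ∀ x, ConvexOn ℝ Set.univ (fun θ => ℓ x θ))
    (hint : ∀ θ, Integrable (fun ω => ℓ (X ω) θ) μ) :
    ConvexOn ℝ Set.univ
      (fun θ : Fin p → ℝ =>
        ⨅ u : ℝ, (u + β⁻¹ * ∫ ω, max (ℓ (X ω) θ - u) 0 ∂μ)) := by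
  obtain ⟨hβ0, hβ1⟩ := hβ
  have hβinv : (1:ℝ) ≤ β⁻¹ := (one_le_inv_iff₀.mpr ⟨hβ0, hβ1.le⟩)
  set f : ℝ → (Fin p → ℝ) → ℝ :=
    fun u θ => u + β⁻¹ * ∫ ω, max (ℓ (X ω) θ - u) 0 ∂μ with hfdef
  have hintmax : ∀ (θ : Fin p → ℝ) (u : ℝ),
      Integrable (fun ω => max (ℓ (X ω) θ - u) 0) μ := fun θ u =>
    ((hint θ).sub (integrable_const u)).pos_part
  -- lower bound: f u θ ≥ E[ℓ(X,θ)]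
  have hlb : ∀ (θ : Fin p → ℝ) (u : ℝ), (∫ ω, ℓ (X ω) θ ∂μ) ≤ f u θ := by
    intro θ u
    have h1 : (0:ℝ) ≤ ∫ ω, max (ℓ (X ω) θ - u) 0 ∂μ :=
      integral_nonneg fun ω => le_max_right _ _
    have h2 : (∫ ω, ℓ (X ω) θ ∂μ) - u ≤ ∫ ω, max (ℓ (X ω) θ - u) 0 ∂μ := by
      have := integral_mono ((hint θ).sub (integrable_const u)) (hintmax θ u)
        (fun ω => le_max_left _ _)
      simp only [Pi.sub_apply] at this
      rwa [integral_sub (hint θ) (integrable_const u), integral_const,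
        probReal_univ, one_smul] at this
    have h3 : (0:ℝ) ≤ (β⁻¹ - 1) * ∫ ω, max (ℓ (X ω) θ - u) 0 ∂μ :=
      mul_nonneg (by linarith) h1
    simp only [hfdef]
    rcases le_or_gt ((∫ ω, ℓ (X ω) θ ∂μ) - u) 0 with h | h
    · nlinarith
    · nlinarith
  have hbdd : ∀ θ : Fin p → ℝ, BddBelow (Set.range fun u => f u θ) :=
    fun θ => ⟨∫ ω, ℓ (X ω) θ ∂μ, by rintro _ ⟨u, rfl⟩; exact hlb θ u⟩
  refine ⟨convex_univ, ?_⟩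
  intro θ₀ _ θ₁ _ a b ha hb hab
  simp only [smul_eq_mul]
  refine le_of_forall_pos_le_add ?_
  intro ε hε
  obtain ⟨u₀, hu₀⟩ := exists_lt_of_ciInf_lt
    (show (⨅ u, f u θ₀) < (⨅ u, f u θ₀) + ε by linarith)
  obtain ⟨u₁, hu₁⟩ := exists_lt_of_ciInf_lt
    (show (⨅ u, f u θ₁) < (⨅ u, f u θ₁) + ε by linarith)
  have key : f (a * u₀ + b * u₁) (a • θ₀ + b • θ₁) ≤ a * f u₀ θ₀ + b * f u₁ θ₁ := by
    have hptwise : ∀ ω, max (ℓ (X ω) (a • θ₀ + b • θ₁) - (a * u₀ + b * u₁)) 0 ≤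
        a * max (ℓ (X ω) θ₀ - u₀) 0 + b * max (ℓ (X ω) θ₁ - u₁) 0 := by
      intro ω
      have hc : ℓ (X ω) (a • θ₀ + b • θ₁) ≤ a * ℓ (X ω) θ₀ + b * ℓ (X ω) θ₁ := by
        have := (hconv (X ω)).2 (Set.mem_univ θ₀) (Set.mem_univ θ₁) ha hb hab
        simpa [smul_eq_mul] using this
      have h0 : a * max (ℓ (X ω) θ₀ - u₀) 0 + b * max (ℓ (X ω) θ₁ - u₁) 0 ≥ 0 :=
        add_nonneg (mul_nonneg ha (le_max_right _ _)) (mul_nonneg hb (le_max_right _ _))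
      refine max_le ?_ h0
      have h4 : a * (ℓ (X ω) θ₀ - u₀) ≤ a * max (ℓ (X ω) θ₀ - u₀) 0 :=
        mul_le_mul_of_nonneg_left (le_max_left _ _) ha
      have h5 : b * (ℓ (X ω) θ₁ - u₁) ≤ b * max (ℓ (X ω) θ₁ - u₁) 0 :=
        mul_le_mul_of_nonneg_left (le_max_left _ _) hb
      nlinarith
    have hintsum : Integrable
        (fun ω => a * max (ℓ (X ω) θ₀ - u₀) 0 + b * max (ℓ (X ω) θ₁ - u₁) 0) μ :=
      ((hintmax θ₀ u₀).const_mul a).add ((hintmax θ₁ u₁).const_mul b)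
    have hI : (∫ ω, max (ℓ (X ω) (a • θ₀ + b • θ₁) - (a * u₀ + b * u₁)) 0 ∂μ) ≤
        a * (∫ ω, max (ℓ (X ω) θ₀ - u₀) 0 ∂μ) + b * (∫ ω, max (ℓ (X ω) θ₁ - u₁) 0 ∂μ) := by
      have := integral_mono (hintmax _ _) hintsum hptwise
      rwa [integral_add ((hintmax θ₀ u₀).const_mul a) ((hintmax θ₁ u₁).const_mul b),
        integral_const_mul, integral_const_mul] at this
    have hβnn : (0:ℝ) ≤ β⁻¹ := by linarith
    have := mul_le_mul_of_nonneg_left hI hβnn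
    simp only [hfdef]
    nlinarith
  calc (⨅ u, f u (a • θ₀ + b • θ₁)) ≤ f (a * u₀ + b * u₁) (a • θ₀ + b • θ₁) :=
        ciInf_le (hbdd _) _
    _ ≤ a * f u₀ θ₀ + b * f u₁ θ₁ := key
    _ ≤ a * ((⨅ u, f u θ₀) + ε) + b * ((⨅ u, f u θ₁) + ε) :=
        add_le_add (mul_le_mul_of_nonneg_left hu₀.le ha)
          (mul_le_mul_of_nonneg_left hu₁.le hb)
    _ = a * (⨅ u, f u θ₀) + b * (⨅ u, f u θ₁) + ε := by ring_nf; nlinarith [hab]
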